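/- (Deterministic bound on the error term B) Let f_1,…,f_q : ℝⁿ → ℝ be differentiable with L-Lipschitz gradients and ‖∇f_k(x)‖ ≤ σ for all k and all x; let m ∈ ℕ^q, p = Σ_k m_k ≥ 1, F_m = Σ_k (m_k/p) f_k, let σ be a permutation of {1,…,s}, let π : {0,…,p−1} → {1,…,q} satisfy |π⁻¹(k)| = m_k for all k, let x*, x₀ ∈ ℝⁿ with ‖x₀ − x*‖ ≤ Δ, and let y_{i,j} ∈ ℝⁿ (i = 0,…,s−1; j = 0,…,p−1) be arbitrary points. Then | p ⟨x₀ − x*, ∇F_m(x₀)⟩ − Σ_{i=0}^{s−1} Σ_{j=0}^{p−1} ⟨ y_{i,j} − x*, U_{σ(i+1)} ∇_{σ(i+1)} f_{π(j)}(y_{i,j}) ⟩ | ≤ (ΔL + σ) Σ_{i=0}^{s−1} Σ_{j=0}^{p−1} ‖x₀ − y_{i,j}‖. -/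

import Mathlib

open MeasureTheory Finset
open scoped RealInnerProductSpace BigOperators

/-- The orthogonal projection `U_b * U_bᵀ` onto the coordinates of block `b`,
where `blk` assigns each coordinate to its block; so for a differentiable `h`,
`blockProj blk b (gradient h x)` represents `U_b ∇_b h(x)`, and block-gradient norms
and inner products can be expressed through it. -/
noncomputable def blockProj {n s : ℕ} (blk : Fin n → Fin s) (b : Fin s)
    (v : EuclideanSpace ℝ (Fin n)) : EuclideanSpace ℝ (Fin n) :=
  WithLp.toLp 2 (fun k => if blk k = b then v k else 0)

lemma sum_blockProj {n s : ℕ} (blk : Fin n → Fin s) (v : EuclideanSpace ℝ (Fin n)) :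
    ∑ b : Fin s, blockProj blk b v = v := by
  ext k
  rw [WithLp.ofLp_sum, Finset.sum_apply]
  simp [blockProj]

lemma blockProj_sub {n s : ℕ} (blk : Fin n → Fin s) (b : Fin s)
    (u w : EuclideanSpace ℝ (Fin n)) :
    blockProj blk b (u - w) = blockProj blk b u - blockProj blk b w := by
  ext k
  simp [blockProj]
  split <;> simp

lemma norm_blockProj_le {n s : ℕ} (blk : Fin n → Fin s) (b : Fin s)
    (v : EuclideanSpace ℝ (Fin n)) : ‖blockProj blk b v‖ ≤ ‖v‖ := by
  rw [EuclideanSpace.norm_eq, EuclideanSpace.norm_eq]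
  apply Real.sqrt_le_sqrt
  apply Finset.sum_le_sum
  intro k _
  simp only [blockProj, WithLp.ofLp_toLp]
  split
  · exact le_rfl
  · simp [sq_nonneg]

lemma gradient_weighted_sum {F : Type*} [NormedAddCommGroup F] [InnerProductSpace ℝ F]
    [CompleteSpace F] {q : ℕ} (f : Fin q → F → ℝ) (c : Fin q → ℝ)
    (hdiff : ∀ k, Differentiable ℝ (f k)) (x : F) :
    gradient (fun x => ∑ k, c k * f k x) x = ∑ k, c k • gradient (f k) x := by
  have hF : HasFDerivAt (fun x => ∑ k, c k * f k x)
      (∑ k, c k • fderiv ℝ (f k) x) x := by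
    apply HasFDerivAt.fun_sum
    intro k _
    exact ((hdiff k x).hasFDerivAt).const_mul (c k)
  have := (hasFDerivAt_iff_hasGradientAt.mp hF).gradient
  rw [this, map_sum]
  refine Finset.sum_congr rfl fun k _ => ?_
  rw [_root_.map_smul]
  rfl

lemma inner_diff_bound {n s : ℕ} (blk : Fin n → Fin s) (b : Fin s)
    (L σv Δ : ℝ) (hΔ0 : 0 ≤ Δ)
    (u w x₀ xstar yv : EuclideanSpace ℝ (Fin n))
    (hu : ‖u - w‖ ≤ L * ‖x₀ - yv‖) (hw : ‖w‖ ≤ σv)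
    (hx : ‖x₀ - xstar‖ ≤ Δ) :
    |⟪x₀ - xstar, blockProj blk b u⟫ - ⟪yv - xstar, blockProj blk b w⟫| ≤
      (Δ * L + σv) * ‖x₀ - yv‖ := by
  have h2 : (⟪x₀ - yv, blockProj blk b w⟫ : ℝ)
      = ⟪x₀ - xstar, blockProj blk b w⟫ - ⟪yv - xstar, blockProj blk b w⟫ := by
    rw [← inner_sub_left]
    congr 1
    abel
  have hid : (⟪x₀ - xstar, blockProj blk b u⟫ : ℝ) - ⟪yv - xstar, blockProj blk b w⟫
      = ⟪x₀ - xstar, blockProj blk b (u - w)⟫ + ⟪x₀ - yv, blockProj blk b w⟫ := by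
    rw [blockProj_sub, inner_sub_right, h2]
    ring
  calc |(⟪x₀ - xstar, blockProj blk b u⟫ : ℝ) - ⟪yv - xstar, blockProj blk b w⟫|
      = |(⟪x₀ - xstar, blockProj blk b (u - w)⟫ : ℝ) + ⟪x₀ - yv, blockProj blk b w⟫| := by
        rw [hid]
    _ ≤ |(⟪x₀ - xstar, blockProj blk b (u - w)⟫ : ℝ)| + |(⟪x₀ - yv, blockProj blk b w⟫ : ℝ)| :=
        abs_add_le _ _
    _ ≤ ‖x₀ - xstar‖ * ‖blockProj blk b (u - w)‖ + ‖x₀ - yv‖ * ‖blockProj blk b w‖ :=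
        add_le_add (abs_real_inner_le_norm _ _) (abs_real_inner_le_norm _ _)
    _ ≤ Δ * (L * ‖x₀ - yv‖) + ‖x₀ - yv‖ * σv :=
        add_le_add
          (mul_le_mul hx ((norm_blockProj_le _ _ _).trans hu) (norm_nonneg _) hΔ0)
          (mul_le_mul_of_nonneg_left ((norm_blockProj_le _ _ _).trans hw) (norm_nonneg _))
    _ = (Δ * L + σv) * ‖x₀ - yv‖ := by ring

/-- Deterministic bound on the error term `B`:
`|p ⟨x₀ − x*, ∇F_m(x₀)⟩ − ∑_i ∑_j ⟨y_{i,j} − x*, U_{σ(i+1)} ∇_{σ(i+1)} f_{π(j)}(y_{i,j})⟩|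
  ≤ (ΔL + σ) ∑_i ∑_j ‖x₀ − y_{i,j}‖`. -/
theorem errorTermB_deterministic_bound
    -- problem data: `n` variables partitioned into `s` blocks by `blk`,
    -- `q` objectives `f k`, frequency vector `wt` with budget `p = ∑ k, wt k`,
    -- weighted-sum function `Fm`, block permutation `σb`, index mapping `π`
    {n s q : ℕ} (blk : Fin n → Fin s)
    (f : Fin q → EuclideanSpace ℝ (Fin n) → ℝ)
    (wt : Fin q → ℕ) (p : ℕ) (hp : p = ∑ k, wt k) (hp1 : 1 ≤ p)
    (Fm : EuclideanSpace ℝ (Fin n) → ℝ)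
    (hFm : ∀ x, Fm x = ∑ k, ((wt k : ℝ) / (p : ℝ)) * f k x)
    (σb : Equiv.Perm (Fin s)) (π : ℕ → Fin q)
    (hπ : ∀ k, ((Finset.range p).filter (fun j => π j = k)).card = wt k)
    (L σv Δ : ℝ)
    (hdiff : ∀ k, Differentiable ℝ (f k))
    (hLip : ∀ k x y, ‖gradient (f k) x - gradient (f k) y‖ ≤ L * ‖x - y‖)
    (hgb : ∀ k x, ‖gradient (f k) x‖ ≤ σv)
    (xstar x₀ : EuclideanSpace ℝ (Fin n)) (hΔ : ‖x₀ - xstar‖ ≤ Δ)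
    (y : Fin s → ℕ → EuclideanSpace ℝ (Fin n)) :
    |(p : ℝ) * ⟪x₀ - xstar, gradient Fm x₀⟫ -
        ∑ i : Fin s, ∑ j ∈ Finset.range p,
          ⟪y i j - xstar, blockProj blk (σb i) (gradient (f (π j)) (y i j))⟫| ≤
      (Δ * L + σv) * ∑ i : Fin s, ∑ j ∈ Finset.range p, ‖x₀ - y i j‖ := by
  have hp0 : (p : ℝ) ≠ 0 := Nat.cast_ne_zero.mpr (by omega)
  have hΔ0 : 0 ≤ Δ := le_trans (norm_nonneg _) hΔ
  have hgradFm : gradient Fm x₀ = ∑ k, ((wt k : ℝ) / (p : ℝ)) • gradient (f k) x₀ := by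
    have hFm' : Fm = fun x => ∑ k, ((wt k : ℝ) / (p : ℝ)) * f k x := funext hFm
    rw [hFm']
    exact gradient_weighted_sum f _ hdiff x₀
  have step1 : (p : ℝ) * ⟪x₀ - xstar, gradient Fm x₀⟫ =
      ∑ k, (wt k : ℝ) * ⟪x₀ - xstar, gradient (f k) x₀⟫ := by
    rw [hgradFm, inner_sum, Finset.mul_sum]
    refine Finset.sum_congr rfl fun k _ => ?_
    rw [real_inner_smul_right]
    field_simp
  have step2 : ∑ k, (wt k : ℝ) * ⟪x₀ - xstar, gradient (f k) x₀⟫ =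
      ∑ j ∈ Finset.range p, ⟪x₀ - xstar, gradient (f (π j)) x₀⟫ := by
    rw [← Finset.sum_fiberwise (Finset.range p) π
      (fun j => (⟪x₀ - xstar, gradient (f (π j)) x₀⟫ : ℝ))]
    refine Finset.sum_congr rfl fun k _ => ?_
    have hc : ∀ j ∈ (Finset.range p).filter (fun j => π j = k),
        (⟪x₀ - xstar, gradient (f (π j)) x₀⟫ : ℝ) = ⟪x₀ - xstar, gradient (f k) x₀⟫ := by
      intro j hj
      rw [(Finset.mem_filter.mp hj).2]
    rw [Finset.sum_congr rfl hc, Finset.sum_const, hπ k, nsmul_eq_mul]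
  have step3 : ∀ w : EuclideanSpace ℝ (Fin n),
      (⟪x₀ - xstar, w⟫ : ℝ) = ∑ i : Fin s, ⟪x₀ - xstar, blockProj blk (σb i) w⟫ := by
    intro w
    rw [← inner_sum]
    congr 1
    rw [Equiv.sum_comp σb (fun b => blockProj blk b w), sum_blockProj]
  have key : (p : ℝ) * ⟪x₀ - xstar, gradient Fm x₀⟫ =
      ∑ i : Fin s, ∑ j ∈ Finset.range p,
        ⟪x₀ - xstar, blockProj blk (σb i) (gradient (f (π j)) x₀)⟫ := by
    rw [step1, step2, Finset.sum_congr rfl fun j _ => step3 (gradient (f (π j)) x₀),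
      Finset.sum_comm]
  rw [key]
  simp only [← Finset.sum_sub_distrib]
  calc |∑ i : Fin s, ∑ j ∈ Finset.range p,
        ((⟪x₀ - xstar, blockProj blk (σb i) (gradient (f (π j)) x₀)⟫ : ℝ) -
          ⟪y i j - xstar, blockProj blk (σb i) (gradient (f (π j)) (y i j))⟫)|
      ≤ ∑ i : Fin s, ∑ j ∈ Finset.range p,
        |(⟪x₀ - xstar, blockProj blk (σb i) (gradient (f (π j)) x₀)⟫ : ℝ) -
          ⟪y i j - xstar, blockProj blk (σb i) (gradient (f (π j)) (y i j))⟫| :=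
      (Finset.abs_sum_le_sum_abs _ _).trans
        (Finset.sum_le_sum fun i _ => Finset.abs_sum_le_sum_abs _ _)
    _ ≤ ∑ i : Fin s, ∑ j ∈ Finset.range p, (Δ * L + σv) * ‖x₀ - y i j‖ := by
      refine Finset.sum_le_sum fun i _ => Finset.sum_le_sum fun j _ => ?_
      exact inner_diff_bound blk (σb i) L σv Δ hΔ0 _ _ x₀ xstar (y i j)
        (hLip (π j) x₀ (y i j)) (hgb (π j) (y i j)) hΔ
    _ = (Δ * L + σv) * ∑ i : Fin s, ∑ j ∈ Finset.range p, ‖x₀ - y i j‖ := by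
      simp [Finset.mul_sum]
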